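/- arXiv:0910.1280 — 2 statements merged into one kernel-verified Lean document; each statement's English description precedes it below -/
import Mathlib

section
/- Let G = A ⋊ S_n with A ⊆ (C₂)ⁿ, a ∈ A, τ ∈ S_n, and σ = (a, τ) ∈ G. The conjugacy classes O_a^G (of a) and O_σ^G (of σ) are square-commutative (i.e. (xy)² = (yx)² for all x ∈ O_a^G, y ∈ O_σ^G) if and only if a ∈ Z(G) or τ² = 1. -/
/-- The action of `S_n` on `(C₂)ⁿ` by permuting coordinates. -/
def permAct (n : ℕ) : Equiv.Perm (Fin n) →* MulAut (Fin n → Multiplicative (ZMod 2)) where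
  toFun h := MulEquiv.arrowCongr h (MulEquiv.refl (Multiplicative (ZMod 2)))
  map_one' := by ext a i; rfl
  map_mul' h₁ h₂ := by ext a i; rfl

section Aux

open SemidirectProduct

variable {n : ℕ}

lemma sqcomm_helper {M : Type*} [CommGroup M] (c b w z t : M) :
    c * (b * (w * z)) = b * (w * (z * t)) ↔ t = c := by
  rw [show b * (w * (z * t)) = t * (b * (w * z)) by
        simp [mul_comm, mul_assoc, mul_left_comm],
      mul_left_inj, eq_comm]

lemma sqcomm_key (π : Equiv.Perm (Fin n)) (b c : Fin n → Multiplicative (ZMod 2)) :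
    ((inl c * (⟨b, π⟩ : (Fin n → Multiplicative (ZMod 2)) ⋊[permAct n] Equiv.Perm (Fin n))) ^ 2
      = (⟨b, π⟩ * inl c) ^ 2)
    ↔ permAct n (π ^ 2) c = c := by
  rw [sq, sq, SemidirectProduct.ext_iff]
  simp only [SemidirectProduct.mul_left, SemidirectProduct.mul_right, map_pow]
  rw [show ((permAct n π) ^ 2) c = permAct n π (permAct n π c) from rfl]
  simp [mul_assoc, sqcomm_helper]

lemma conj_inl {a : Fin n → Multiplicative (ZMod 2)}
    {x : (Fin n → Multiplicative (ZMod 2)) ⋊[permAct n] Equiv.Perm (Fin n)}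
    (h : IsConj (inl a) x) : ∃ ρ, x = inl (permAct n ρ a) := by
  rw [isConj_iff] at h
  obtain ⟨g, rfl⟩ := h
  refine ⟨g.right, ?_⟩
  ext
  · simp [mul_left, mul_right, inv_left, ← map_mul, mul_comm]
  · simp [mul_right]

lemma center_iff {a : Fin n → Multiplicative (ZMod 2)} :
    inl a ∈ Subgroup.center ((Fin n → Multiplicative (ZMod 2)) ⋊[permAct n] Equiv.Perm (Fin n))
    ↔ ∀ π, permAct n π a = a := by
  rw [Subgroup.mem_center_iff]
  constructor
  · intro h π
    have := congrArg SemidirectProduct.left (h (inr π))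
    simpa [mul_left] using this
  · intro h g
    ext
    · simp [mul_left, h, mul_comm]
    · simp [mul_right]

lemma conj_right {a : Fin n → Multiplicative (ZMod 2)} {τ : Equiv.Perm (Fin n)}
    {y : (Fin n → Multiplicative (ZMod 2)) ⋊[permAct n] Equiv.Perm (Fin n)}
    (h : IsConj (⟨a, τ⟩ : (Fin n → Multiplicative (ZMod 2)) ⋊[permAct n] Equiv.Perm (Fin n)) y) :
    ∃ r, y.right = r * τ * r⁻¹ := by
  rw [isConj_iff] at h
  obtain ⟨g, rfl⟩ := h
  exact ⟨g.right, by simp [mul_right]⟩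

lemma permAct_apply (π : Equiv.Perm (Fin n)) (c : Fin n → Multiplicative (ZMod 2)) (i : Fin n) :
    permAct n π c i = c (π⁻¹ i) := rfl

end Aux

/-- In `G = (C₂)ⁿ ⋊ S_n`, for `a ∈ A`, `τ ∈ S_n`, `σ = (a, τ)`, the conjugacy classes of
`a` and of `σ` are square-commutative (`(xy)² = (yx)²` for all `x ∈ O_a`, `y ∈ O_σ`)
iff `a ∈ Z(G)` or `τ² = 1`. -/
theorem squareCommutative_iff (n : ℕ) (a : Fin n → Multiplicative (ZMod 2))
    (τ : Equiv.Perm (Fin n)) :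
    (∀ x y : (Fin n → Multiplicative (ZMod 2)) ⋊[permAct n] Equiv.Perm (Fin n),
        IsConj (SemidirectProduct.inl a) x → IsConj ⟨a, τ⟩ y →
        (x * y) ^ 2 = (y * x) ^ 2) ↔
      (SemidirectProduct.inl a ∈
          Subgroup.center ((Fin n → Multiplicative (ZMod 2)) ⋊[permAct n] Equiv.Perm (Fin n)) ∨
        τ ^ 2 = 1) := by
  constructor
  · -- square-commutative → (central ∨ τ² = 1)
    intro H
    by_cases hc : SemidirectProduct.inl a ∈
        Subgroup.center ((Fin n → Multiplicative (ZMod 2)) ⋊[permAct n] Equiv.Perm (Fin n))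
    · exact Or.inl hc
    refine Or.inr ?_
    by_contra hτ
    -- a is not constant: get p q with a p ≠ a q
    rw [center_iff] at hc
    push_neg at hc
    obtain ⟨π₀, hπ₀⟩ := hc
    have ha : ∃ p q, a p ≠ a q := by
      by_contra hcon
      push_neg at hcon
      exact hπ₀ (funext fun i => hcon _ _)
    obtain ⟨p, q, hpq⟩ := ha
    -- τ² moves some point j₀; set i₀ := τ² j₀
    have hj : ∃ j₀, (τ ^ 2) j₀ ≠ j₀ := by
      by_contra hcon
      push_neg at hcon
      exact hτ (Equiv.ext hcon)
    obtain ⟨j₀, hj₀⟩ := hj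
    set i₀ := (τ ^ 2) j₀ with hi₀
    have hji : j₀ ≠ i₀ := fun h => hj₀ h.symm
    -- build a permutation e with e i₀ = q and e j₀ = p
    set f := Equiv.swap i₀ q with hf
    set j₁ := f j₀ with hj₁
    have hqp : q ≠ p := fun h => hpq (congrArg a h.symm)
    have hj₁q : j₁ ≠ q := by
      intro h
      apply hji
      apply f.injective
      rw [hf, Equiv.swap_apply_left]
      exact h
    set g := Equiv.swap j₁ p with hg
    set e := f.trans g with he
    have hei : e i₀ = q := by
      simp only [he, Equiv.trans_apply, hf, Equiv.swap_apply_left]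
      rw [hg, Equiv.swap_apply_of_ne_of_ne (Ne.symm hj₁q) hqp]
    have hej : e j₀ = p := by
      simp only [he, Equiv.trans_apply, ← hj₁]
      rw [hg, Equiv.swap_apply_left]
    set ρ := e⁻¹ with hρ
    have hx : IsConj (SemidirectProduct.inl a)
        (SemidirectProduct.inl (permAct n ρ a) :
          (Fin n → Multiplicative (ZMod 2)) ⋊[permAct n] Equiv.Perm (Fin n)) := by
      rw [isConj_iff]
      exact ⟨SemidirectProduct.inr ρ, by rw [← MonoidHom.map_inv, SemidirectProduct.inl_aut]⟩
    have hy : IsConj (⟨a, τ⟩ : (Fin n → Multiplicative (ZMod 2)) ⋊[permAct n]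
        Equiv.Perm (Fin n)) ⟨a, τ⟩ := IsConj.refl _
    have hsq := H _ _ hx hy
    rw [sqcomm_key] at hsq
    have := congrFun hsq i₀
    rw [permAct_apply, permAct_apply, permAct_apply] at this
    have h1 : (τ ^ 2)⁻¹ i₀ = j₀ := by rw [hi₀, Equiv.Perm.inv_def, Equiv.symm_apply_apply]
    rw [h1] at this
    have h2 : ρ⁻¹ j₀ = p := by rw [hρ, inv_inv]; exact hej
    have h3 : ρ⁻¹ i₀ = q := by rw [hρ, inv_inv]; exact hei
    rw [h2, h3] at this
    exact hpq this
  · -- (central ∨ τ² = 1) → square-commutative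
    rintro h x y hx hy
    obtain ⟨ρ, rfl⟩ := conj_inl hx
    obtain ⟨r, hr⟩ := conj_right hy
    have hy' : y = (⟨y.left, y.right⟩ : (Fin n → Multiplicative (ZMod 2)) ⋊[permAct n]
        Equiv.Perm (Fin n)) := rfl
    rw [hy', sqcomm_key]
    rcases h with hc | hτ
    · rw [center_iff] at hc
      rw [hc ρ, hc _]
    · have : y.right ^ 2 = 1 := by
        rw [hr, conj_pow, hτ]
        simp
      rw [this, map_one]
      rfl
end

section
/- Let n = 2k with k ≥ 1 and consider S_n. The conjugacy class of transpositions and the conjugacy class of fixed-point-free involutions (cycle type 2^k) are square-commutative: for any transposition x and any product y of k disjoint transpositions, (xy)² = (yx)². -/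
/-- In `S_{2k}`, the class of transpositions and the class of fixed-point-free involutions
(cycle type `2^k`) are square-commutative: if `x` is a transposition and `y` is an involution
without fixed points, then `(xy)² = (yx)²`. -/
theorem transposition_fpfInvolution_squareCommutative (k : ℕ) (hk : 1 ≤ k)
    (x y : Equiv.Perm (Fin (2 * k))) (i j : Fin (2 * k)) (hij : i ≠ j)
    (hx : x = Equiv.swap i j) (hy : y ^ 2 = 1) (hyf : ∀ m, y m ≠ m) :
    (x * y) ^ 2 = (y * x) ^ 2 := by
  subst hx
  have hy2 : ∀ m, y (y m) = m := by
    intro m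
    have := DFunLike.congr_fun hy m
    simpa [sq, Equiv.Perm.mul_apply] using this
  -- pointwise: (swap i j * y)^4 = 1
  have hf : ∀ m : Fin (2 * k),
      Equiv.swap i j (y (Equiv.swap i j (y (Equiv.swap i j (y (Equiv.swap i j (y m))))))) = m := by
    intro m
    by_cases hA : y i = j
    · have hAj : y j = i := by rw [← hA, hy2]
      by_cases h1 : m = i
      · subst h1; simp [hA, hAj]
      · by_cases h2 : m = j
        · subst h2; simp [hA, hAj]
        · have hm1 : y m ≠ i := fun h => h2 (by
            have := congrArg y h
            rw [hy2, hA] at this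
            exact this)
          have hm2 : y m ≠ j := fun h => h1 (by
            have := congrArg y h
            rw [hy2, hAj] at this
            exact this)
          rw [Equiv.swap_apply_of_ne_of_ne hm1 hm2, hy2,
              Equiv.swap_apply_of_ne_of_ne h1 h2,
              Equiv.swap_apply_of_ne_of_ne hm1 hm2, hy2,
              Equiv.swap_apply_of_ne_of_ne h1 h2]
    · -- y i ≠ j
      have hai : y i ≠ i := hyf i
      have hbj : y j ≠ j := hyf j
      have hbi : y j ≠ i := fun h => hA (by
        have := congrArg y h
        rw [hy2] at this
        exact this.symm)
      by_cases h1 : m = i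
      · subst h1
        rw [Equiv.swap_apply_of_ne_of_ne hai hA, hy2, Equiv.swap_apply_left,
            Equiv.swap_apply_of_ne_of_ne hbi hbj, hy2, Equiv.swap_apply_right]
      · by_cases h2 : m = j
        · subst h2
          rw [Equiv.swap_apply_of_ne_of_ne hbi hbj, hy2, Equiv.swap_apply_right,
              Equiv.swap_apply_of_ne_of_ne hai hA, hy2, Equiv.swap_apply_left]
        · by_cases h3 : m = y i
          · subst h3
            rw [hy2, Equiv.swap_apply_left,
                Equiv.swap_apply_of_ne_of_ne hbi hbj, hy2, Equiv.swap_apply_right,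
                Equiv.swap_apply_of_ne_of_ne hai hA]
          · by_cases h4 : m = y j
            · subst h4
              rw [hy2, Equiv.swap_apply_right,
                  Equiv.swap_apply_of_ne_of_ne hai hA, hy2, Equiv.swap_apply_left,
                  Equiv.swap_apply_of_ne_of_ne hbi hbj]
            · have hm1 : y m ≠ i := fun h => h3 (by
                have := congrArg y h
                rw [hy2] at this
                exact this.symm ▸ rfl)
              have hm2 : y m ≠ j := fun h => h4 (by
                have := congrArg y h
                rw [hy2] at this
                exact this.symm ▸ rfl)
              rw [Equiv.swap_apply_of_ne_of_ne hm1 hm2, hy2,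
                  Equiv.swap_apply_of_ne_of_ne h1 h2,
                  Equiv.swap_apply_of_ne_of_ne hm1 hm2, hy2,
                  Equiv.swap_apply_of_ne_of_ne h1 h2]
  have h4 : (Equiv.swap i j * y) ^ 4 = 1 := by
    ext m
    simpa [pow_succ, Equiv.Perm.mul_apply] using congrArg Fin.val (hf m)
  have hyy : y * y = 1 := by rw [← sq]; exact hy
  have hyinv : y⁻¹ = y := inv_eq_of_mul_eq_one_right hyy
  have hfinv : y * Equiv.swap i j = (Equiv.swap i j * y)⁻¹ := by
    rw [mul_inv_rev, hyinv, Equiv.swap_inv]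
  have h22 : (Equiv.swap i j * y) ^ 2 * (Equiv.swap i j * y) ^ 2 = 1 := by
    rw [← pow_add]; exact h4
  rw [hfinv, inv_pow, inv_eq_of_mul_eq_one_right h22]
end
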